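/- Let η : ℝ → ℝ be a C¹ convex function and c₁, c₂, c₃ ∈ ℝ. Define E(u,v,w,z) = η(u) + c₁v + c₂w + c₃z and Q(u,v,w,z) = ∫₀^u s·η'(s) ds + c₁·u·v + c₂·(v²/2 + u·w) + c₃·(v·w + u·z). Then for every smooth solution (u,v,w,z) of the system u_t + (u²/2)_x = 0, v_t + (uv)_x = 0, w_t + (v²/2 + uw)_x = 0, z_t + (vw + uz)_x = 0, the additional conservation law E(u,v,w,z)_t + Q(u,v,w,z)_x = 0 holds. -/

import Mathlib

open Real MeasureTheory

/-- Entropy–entropy flux pair for the 4×4 prolonged Burgers system: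
with `E(u,v,w,z) = η(u) + c₁v + c₂w + c₃z` and
`Q(u,v,w,z) = ∫₀ᵘ s η'(s) ds + c₁uv + c₂(v²/2 + uw) + c₃(vw + uz)`,
every `C¹` solution of the system on an open set `Ω` satisfies the additional
conservation law `E_t + Q_x = 0`. -/
theorem entropy_pair_conservation (η : ℝ → ℝ) (hη : ContDiff ℝ 1 η)
    (hconv : ConvexOn ℝ Set.univ η) (c₁ c₂ c₃ : ℝ)
    (Ω : Set (ℝ × ℝ)) (hΩ : IsOpen Ω)
    (u v w z : ℝ → ℝ → ℝ)
    (hu : ContDiffOn ℝ 1 ↿u Ω) (hv : ContDiffOn ℝ 1 ↿v Ω)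
    (hw : ContDiffOn ℝ 1 ↿w Ω) (hz : ContDiffOn ℝ 1 ↿z Ω)
    (heq1 : ∀ x t : ℝ, (x, t) ∈ Ω →
      deriv (fun τ => u x τ) t + deriv (fun y => (u y t) ^ 2 / 2) x = 0)
    (heq2 : ∀ x t : ℝ, (x, t) ∈ Ω →
      deriv (fun τ => v x τ) t + deriv (fun y => u y t * v y t) x = 0)
    (heq3 : ∀ x t : ℝ, (x, t) ∈ Ω →
      deriv (fun τ => w x τ) t
        + deriv (fun y => (v y t) ^ 2 / 2 + u y t * w y t) x = 0)
    (heq4 : ∀ x t : ℝ, (x, t) ∈ Ω →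
      deriv (fun τ => z x τ) t
        + deriv (fun y => v y t * w y t + u y t * z y t) x = 0) :
    ∀ x t : ℝ, (x, t) ∈ Ω →
      deriv (fun τ => η (u x τ) + c₁ * v x τ + c₂ * w x τ + c₃ * z x τ) t
        + deriv (fun y =>
            (∫ s in (0:ℝ)..(u y t), s * deriv η s)
              + c₁ * (u y t * v y t)
              + c₂ * ((v y t) ^ 2 / 2 + u y t * w y t)
              + c₃ * (v y t * w y t + u y t * z y t)) x = 0 := by
  intro x t hxt
  have hmem : Ω ∈ nhds (x, t) := hΩ.mem_nhds hxt
  have hud : DifferentiableAt ℝ ↿u (x, t) :=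
    ((hu.differentiableOn one_ne_zero) (x, t) hxt).differentiableAt hmem
  have hvd : DifferentiableAt ℝ ↿v (x, t) :=
    ((hv.differentiableOn one_ne_zero) (x, t) hxt).differentiableAt hmem
  have hwd : DifferentiableAt ℝ ↿w (x, t) :=
    ((hw.differentiableOn one_ne_zero) (x, t) hxt).differentiableAt hmem
  have hzd : DifferentiableAt ℝ ↿z (x, t) :=
    ((hz.differentiableOn one_ne_zero) (x, t) hxt).differentiableAt hmem
  have hlx : DifferentiableAt ℝ (fun y : ℝ => (y, t)) x :=
    differentiableAt_id.prodMk (differentiableAt_const t)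
  have hlt : DifferentiableAt ℝ (fun τ : ℝ => (x, τ)) t :=
    (differentiableAt_const x).prodMk differentiableAt_id
  have hUx : DifferentiableAt ℝ (fun y => u y t) x := (hud.comp x hlx :)
  have hVx : DifferentiableAt ℝ (fun y => v y t) x := (hvd.comp x hlx :)
  have hWx : DifferentiableAt ℝ (fun y => w y t) x := (hwd.comp x hlx :)
  have hZx : DifferentiableAt ℝ (fun y => z y t) x := (hzd.comp x hlx :)
  have hUt : DifferentiableAt ℝ (fun τ => u x τ) t := hud.comp t hlt
  have hVt : DifferentiableAt ℝ (fun τ => v x τ) t := hvd.comp t hlt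
  have hWt : DifferentiableAt ℝ (fun τ => w x τ) t := hwd.comp t hlt
  have hZt : DifferentiableAt ℝ (fun τ => z x τ) t := hzd.comp t hlt
  set ux := deriv (fun y => u y t) x with hux
  set ut := deriv (fun τ => u x τ) t with hut
  set vt := deriv (fun τ => v x τ) t with hvt
  set wt := deriv (fun τ => w x τ) t with hwt
  set zt := deriv (fun τ => z x τ) t with hzt
  set D2 := deriv (fun y => u y t * v y t) x with hD2
  set D3 := deriv (fun y => (v y t) ^ 2 / 2 + u y t * w y t) x with hD3
  set D4 := deriv (fun y => v y t * w y t + u y t * z y t) x with hD4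
  have hηd : Continuous (deriv η) := hη.continuous_deriv le_rfl
  have hg : Continuous (fun s : ℝ => s * deriv η s) := continuous_id.mul hηd
  -- FTC
  have hF : HasDerivAt (fun a : ℝ => ∫ s in (0:ℝ)..a, s * deriv η s)
      (u x t * deriv η (u x t)) (u x t) :=
    intervalIntegral.integral_hasDerivAt_right
      (hg.intervalIntegrable 0 (u x t))
      (hg.stronglyMeasurableAtFilter _ _) hg.continuousAt
  -- space derivative of Q
  have HQ : HasDerivAt (fun y =>
      (∫ s in (0:ℝ)..(u y t), s * deriv η s)
        + c₁ * (u y t * v y t)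
        + c₂ * ((v y t) ^ 2 / 2 + u y t * w y t)
        + c₃ * (v y t * w y t + u y t * z y t))
      (u x t * deriv η (u x t) * ux + c₁ * D2 + c₂ * D3 + c₃ * D4) x := by
    have h1 : HasDerivAt (fun y => ∫ s in (0:ℝ)..(u y t), s * deriv η s)
        (u x t * deriv η (u x t) * ux) x := (hF.comp x hUx.hasDerivAt :)
    have h2 : HasDerivAt (fun y => u y t * v y t) D2 x := (hUx.mul hVx).hasDerivAt
    have h3 : HasDerivAt (fun y => (v y t) ^ 2 / 2 + u y t * w y t) D3 x :=
      (((hVx.pow 2).div_const 2).add (hUx.mul hWx)).hasDerivAt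
    have h4 : HasDerivAt (fun y => v y t * w y t + u y t * z y t) D4 x :=
      ((hVx.mul hWx).add (hUx.mul hZx)).hasDerivAt
    exact ((h1.add (h2.const_mul c₁)).add (h3.const_mul c₂)).add (h4.const_mul c₃)
  -- time derivative of E
  have Hη : HasDerivAt (fun τ => η (u x τ)) (deriv η (u x t) * ut) t :=
    ((hη.differentiable one_ne_zero) (u x t)).hasDerivAt.comp t hUt.hasDerivAt
  have HE : HasDerivAt (fun τ => η (u x τ) + c₁ * v x τ + c₂ * w x τ + c₃ * z x τ)
      (deriv η (u x t) * ut + c₁ * vt + c₂ * wt + c₃ * zt) t :=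
    ((Hη.add (hVt.hasDerivAt.const_mul c₁)).add (hWt.hasDerivAt.const_mul c₂)).add
      (hZt.hasDerivAt.const_mul c₃)
  rw [HE.deriv, HQ.deriv]
  -- Burgers equation for u
  have Hsq : HasDerivAt (fun y => (u y t) ^ 2 / 2) (u x t * ux) x := by
    have : HasDerivAt (fun y => (u y t) ^ 2 / 2) (((2:ℕ):ℝ) * u x t ^ (2 - 1) * ux / 2) x :=
      (hUx.hasDerivAt.fun_pow 2).div_const 2
    convert this using 1
    ring
  have e1 : ut + u x t * ux = 0 := by
    have := heq1 x t hxt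
    rwa [Hsq.deriv] at this
  have e2 : vt + D2 = 0 := heq2 x t hxt
  have e3 : wt + D3 = 0 := heq3 x t hxt
  have e4 : zt + D4 = 0 := heq4 x t hxt
  linear_combination deriv η (u x t) * e1 + c₁ * e2 + c₂ * e3 + c₃ * e4
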